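/- Let P be a monic hyperbolic polynomial of degree n ≥ 2 (all roots real), and for λ ∈ ℝ write the roots of P − λP′ in nondecreasing order x_1(λ) ≤ … ≤ x_n(λ). For 1 ≤ m ≤ n−1 define f_m(λ) = ∑_{i=1}^m (x_i(λ) − λ). Then each f_m is nondecreasing on (−∞, 0] and nonincreasing on [0, ∞); moreover f_n(λ) = ∑_{i=1}^n x_i(0) is constant in λ. -/

import Mathlib

open Polynomial Finset Matrix

local notation "⟪" x ", " y "⟫" => @inner ℝ _ _ x y

lemma aux_natDegree_prodXC (n : ℕ) (w : ℕ → ℝ) :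
    (∏ i ∈ range n, (X - C (w i))).natDegree = n := by
  rw [natDegree_prod_of_monic _ _ (fun i _ => monic_X_sub_C _)]
  simp

lemma aux_coeff_prodXC (n : ℕ) (hn : 1 ≤ n) (w : ℕ → ℝ) :
    (∏ i ∈ range n, (X - C (w i))).coeff (n - 1) = -∑ i ∈ range n, w i := by
  have h1 := prod_X_sub_C_nextCoeff (s := range n) w
  rwa [nextCoeff_of_natDegree_pos (by rw [aux_natDegree_prodXC]; omega),
    aux_natDegree_prodXC] at h1

lemma sum_roots_eq (n : ℕ) (hn : 1 ≤ n) (x w : ℕ → ℝ) (lam : ℝ)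
    (h : (∏ i ∈ range n, (X - C (x i))) - C lam * derivative (∏ i ∈ range n, (X - C (x i)))
       = ∏ i ∈ range n, (X - C (w i))) :
    ∑ i ∈ range n, w i = (∑ i ∈ range n, x i) + n * lam := by
  have hc := congrArg (fun q => coeff q (n - 1)) h
  simp only [coeff_sub, coeff_C_mul] at hc
  rw [aux_coeff_prodXC n hn x, aux_coeff_prodXC n hn w, coeff_derivative] at hc
  have hn1 : n - 1 + 1 = n := by omega
  rw [hn1] at hc
  have hmonic : (∏ i ∈ range n, (X - C (x i))).Monic :=
    monic_prod_of_monic _ _ (fun i _ => monic_X_sub_C _)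
  have hcn : (∏ i ∈ range n, (X - C (x i))).coeff n = 1 := by
    have := hmonic.coeff_natDegree
    rwa [aux_natDegree_prodXC] at this
  rw [hcn] at hc
  rw [Nat.cast_sub hn] at hc
  push_cast at hc
  linarith

lemma aux_derivative_finset_prod {ι : Type*} [DecidableEq ι] (s : Finset ι) (f : ι → Polynomial ℝ) :
    derivative (∏ i ∈ s, f i) = ∑ i ∈ s, (∏ j ∈ s.erase i, f j) * derivative (f i) := by
  rw [Finset.prod_eq_multiset_prod, Polynomial.derivative_prod, Finset.sum_eq_multiset_sum]
  refine congr_arg Multiset.sum (Multiset.map_congr rfl fun i hi => ?_)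
  rw [← Finset.erase_val, ← Finset.prod_eq_multiset_prod]

lemma aux_eval_pencil (n : ℕ) (x : ℕ → ℝ) (lam t : ℝ) (ht : ∀ i ∈ range n, t ≠ x i) :
    eval t ((∏ i ∈ range n, (X - C (x i))) - C lam * derivative (∏ i ∈ range n, (X - C (x i))))
    = (∏ i ∈ range n, (t - x i)) * (1 - lam * ∑ i ∈ range n, (t - x i)⁻¹) := by
  have hd : ∀ i ∈ range n, t - x i ≠ 0 := fun i hi => sub_ne_zero.mpr (ht i hi)
  rw [aux_derivative_finset_prod]
  simp only [eval_sub, eval_mul, eval_C, eval_prod, eval_finset_sum, eval_sub, eval_X,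
    derivative_sub, derivative_X, derivative_C, sub_zero, eval_mul, eval_one, mul_one]
  rw [mul_sub, mul_one, Finset.mul_sum]
  congr 1
  rw [Finset.mul_sum, Finset.mul_sum]
  apply Finset.sum_congr rfl
  intro i hi
  rw [← Finset.prod_erase_mul (range n) _ hi]
  field_simp [hd i hi]

lemma aux_det_pencil (n : ℕ) (x : ℕ → ℝ) (lam t : ℝ) (ht : ∀ k : Fin n, t - x (k : ℕ) ≠ 0) :
    (t • (1 : Matrix (Fin n) (Fin n) ℝ) -
      (Matrix.diagonal (fun k : Fin n => x (k : ℕ)) +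
        lam • Matrix.vecMulVec (fun _ : Fin n => (1:ℝ)) (fun _ : Fin n => (1:ℝ)))).det
    = (∏ k : Fin n, (t - x (k : ℕ))) * (1 - lam * ∑ k : Fin n, (t - x (k : ℕ))⁻¹) := by
  have hM : t • (1 : Matrix (Fin n) (Fin n) ℝ) -
      (Matrix.diagonal (fun k : Fin n => x (k : ℕ)) +
        lam • Matrix.vecMulVec (fun _ : Fin n => (1:ℝ)) (fun _ : Fin n => (1:ℝ)))
      = Matrix.diagonal (fun k : Fin n => t - x (k : ℕ)) +
        Matrix.replicateCol Unit (fun _ : Fin n => -lam) * Matrix.replicateRow Unit (fun _ : Fin n => (1:ℝ)) := by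
    rw [← Matrix.vecMulVec_eq]
    ext i j
    by_cases h : i = j <;>
      simp [Matrix.diagonal_apply, Matrix.vecMulVec_apply, h, Matrix.one_apply, sub_eq_add_neg]
    ring
  rw [hM]
  have hd : IsUnit (Matrix.diagonal (fun k : Fin n => t - x (k : ℕ))).det := by
    rw [Matrix.det_diagonal]
    exact (Finset.prod_ne_zero_iff.mpr (fun k _ => ht k)).isUnit
  have hinv : (Matrix.diagonal fun k : Fin n => t - x (k:ℕ))⁻¹
      = Matrix.diagonal (fun k : Fin n => (t - x (k:ℕ))⁻¹) := by
    apply Matrix.inv_eq_right_inv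
    rw [Matrix.diagonal_mul_diagonal]
    have : (fun k : Fin n => (t - x (k:ℕ)) * (t - x (k:ℕ))⁻¹) = fun _ => (1:ℝ) := by
      funext k; exact mul_inv_cancel₀ (ht k)
    rw [this, Matrix.diagonal_one]
  rw [Matrix.det_add_replicateCol_mul_replicateRow hd]
  rw [Matrix.det_diagonal, Matrix.det_unique, hinv]
  simp only [Matrix.add_apply, Matrix.one_apply_eq, Matrix.mul_apply, Matrix.replicateRow_apply,
    Matrix.replicateCol_apply, Matrix.diagonal_apply, Finset.sum_ite_eq, Finset.mem_univ, if_true,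
    Ring.inverse_eq_inv']
  simp only [one_mul, Finset.sum_ite_eq, Finset.mem_univ, if_true, Ring.inverse_eq_inv',
    Pi.inv_apply]
  congr 1
  simp only [Finset.sum_ite_eq', Finset.mem_univ, if_true]
  have h2 : ∑ k : Fin n, (t - x (k:ℕ))⁻¹ * -lam = -(lam * ∑ k : Fin n, (t - x (k:ℕ))⁻¹) := by
    rw [Finset.mul_sum, ← Finset.sum_neg_distrib]
    exact Finset.sum_congr rfl fun k _ => by ring
  rw [h2]
  ring

lemma aux_det_spectral {n : ℕ} (M : Matrix (Fin n) (Fin n) ℝ) (hM : M.IsHermitian) (t : ℝ) :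
    (t • (1 : Matrix (Fin n) (Fin n) ℝ) - M).det = ∏ k : Fin n, (t - hM.eigenvalues k) := by
  have hU1 : (hM.eigenvectorUnitary : Matrix (Fin n) (Fin n) ℝ) *
      star (hM.eigenvectorUnitary : Matrix (Fin n) (Fin n) ℝ) = 1 :=
    Matrix.mem_unitaryGroup_iff.mp hM.eigenvectorUnitary.2
  set U : Matrix (Fin n) (Fin n) ℝ := (hM.eigenvectorUnitary : Matrix (Fin n) (Fin n) ℝ) with hUdef
  have hspec := hM.spectral_theorem
  rw [Unitary.conjStarAlgAut_apply] at hspec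
  have key : t • (1 : Matrix (Fin n) (Fin n) ℝ) - M
      = U * (t • (1 : Matrix (Fin n) (Fin n) ℝ) - Matrix.diagonal (RCLike.ofReal ∘ hM.eigenvalues)) * star U := by
    rw [Matrix.mul_sub, Matrix.sub_mul, ← hspec]
    congr 1
    rw [Matrix.mul_smul, Matrix.mul_one, Matrix.smul_mul, hU1]
  rw [key, Matrix.det_mul, Matrix.det_mul]
  have hdet1 : U.det * (star U).det = 1 := by
    rw [← Matrix.det_mul, hU1, Matrix.det_one]
  have : U.det * ((t • (1:Matrix (Fin n) (Fin n) ℝ) - Matrix.diagonal (RCLike.ofReal ∘ hM.eigenvalues)).det) * (star U).det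
      = (U.det * (star U).det) * (t • (1:Matrix (Fin n) (Fin n) ℝ) - Matrix.diagonal (RCLike.ofReal ∘ hM.eigenvalues)).det := by
    ring
  rw [this, hdet1, one_mul]
  rw [Matrix.smul_one_eq_diagonal, Matrix.diagonal_sub, Matrix.det_diagonal]
  simp [RCLike.ofReal]

lemma aux_perm {n : ℕ} (xsf : Fin n → ℝ) (μ : Fin n → ℝ) (hmono : Monotone xsf)
    (hprod : ∏ k : Fin n, (X - C (xsf k)) = ∏ k : Fin n, (X - C (μ k))) :
    ∃ σ : Equiv.Perm (Fin n), xsf = μ ∘ σ := by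
  have hroots : Multiset.map xsf Finset.univ.val = Multiset.map μ Finset.univ.val := by
    have h1 : ∀ f : Fin n → ℝ, (∏ k : Fin n, (X - C (f k))) =
        ((Multiset.map f Finset.univ.val).map fun a => X - C a).prod := by
      intro f
      rw [Multiset.map_map, Finset.prod_eq_multiset_prod]
      rfl
    have := congrArg Polynomial.roots hprod
    rwa [h1 xsf, h1 μ, Polynomial.roots_multiset_prod_X_sub_C,
      Polynomial.roots_multiset_prod_X_sub_C] at this
  have hperm : (List.ofFn xsf).Perm (List.ofFn μ) := by
    rw [← Multiset.coe_eq_coe]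
    simpa [Fin.univ_val_map] using hroots
  refine ⟨Tuple.sort μ, ?_⟩
  have hg : Monotone (μ ∘ Tuple.sort μ) := Tuple.monotone_sort μ
  have hperm2 : (List.ofFn xsf).Perm (List.ofFn (μ ∘ Tuple.sort μ)) :=
    hperm.trans ((Tuple.sort μ).ofFn_comp_perm μ).symm
  exact List.ofFn_injective (List.Perm.eq_of_sortedLE hmono.sortedLE_ofFn hg.sortedLE_ofFn hperm2)

noncomputable def pencilMat (n : ℕ) (x : ℕ → ℝ) (lam : ℝ) : Matrix (Fin n) (Fin n) ℝ :=
  Matrix.diagonal (fun k : Fin n => x (k : ℕ)) +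
    lam • Matrix.vecMulVec (fun _ : Fin n => (1:ℝ)) (fun _ : Fin n => (1:ℝ))

lemma pencilMat_isHermitian (n : ℕ) (x : ℕ → ℝ) (lam : ℝ) :
    (pencilMat n x lam).IsHermitian := by
  unfold pencilMat Matrix.IsHermitian
  ext i j
  by_cases h : i = j
  · simp [Matrix.diagonal_apply, Matrix.vecMulVec_apply, h, Matrix.conjTranspose_apply]
  · simp only [Matrix.conjTranspose_apply, Matrix.add_apply, Matrix.diagonal_apply,
      Matrix.smul_apply, Matrix.vecMulVec_apply, star_trivial]
    rw [if_neg h, if_neg (fun hji => h (hji.symm))]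

lemma aux_mono_fin (n : ℕ) (f : ℕ → ℝ) (h : ∀ i, i + 1 < n → f i ≤ f (i+1)) :
    Monotone (fun k : Fin n => f (k : ℕ)) := by
  have H : ∀ d j, j + d < n → f j ≤ f (j + d) := by
    intro d
    induction d with
    | zero => intro j _; simp
    | succ d ih =>
        intro j hj
        calc f j ≤ f (j + d) := ih j (by omega)
          _ ≤ f (j + d + 1) := h _ (by omega)
  intro a b hab
  have hab' : (a:ℕ) ≤ (b:ℕ) := hab
  have := H ((b:ℕ) - (a:ℕ)) (a:ℕ) (by omega)
  have e : (a:ℕ) + ((b:ℕ) - (a:ℕ)) = (b:ℕ) := by omega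
  rwa [e] at this

lemma aux_identify (n : ℕ) (x xs' : ℕ → ℝ) (lam : ℝ)
    (hfact : (∏ i ∈ range n, (X - C (x i))) - C lam * derivative (∏ i ∈ range n, (X - C (x i)))
       = ∏ i ∈ range n, (X - C (xs' i)))
    (hmono : ∀ i, i + 1 < n → xs' i ≤ xs' (i+1)) :
    ∃ σ : Equiv.Perm (Fin n),
      (fun k : Fin n => xs' (k : ℕ)) = (pencilMat_isHermitian n x lam).eigenvalues ∘ σ := by
  set μ := (pencilMat_isHermitian n x lam).eigenvalues with hμ
  have hev : ∀ t : ℝ, (∀ i ∈ range n, t ≠ x i) →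
      eval t (∏ k : Fin n, (X - C (xs' (k:ℕ)))) = eval t (∏ k : Fin n, (X - C (μ k))) := by
    intro t ht
    have h1 : eval t (∏ k : Fin n, (X - C (xs' (k:ℕ)))) = eval t (∏ i ∈ range n, (X - C (xs' i))) := by
      rw [Fin.prod_univ_eq_prod_range (fun i => X - C (xs' i)) n]
    have ht' : ∀ k : Fin n, t - x (k:ℕ) ≠ 0 := fun k => sub_ne_zero.mpr (ht k (mem_range.mpr k.2))
    rw [h1, ← hfact, aux_eval_pencil n x lam t ht,
      ← Fin.prod_univ_eq_prod_range (fun i => t - x i) n,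
      ← Fin.sum_univ_eq_sum_range (fun i => (t - x i)⁻¹) n,
      ← aux_det_pencil n x lam t ht',
      show ((Matrix.diagonal fun k : Fin n => x (k:ℕ)) +
        lam • Matrix.vecMulVec (fun _ : Fin n => (1:ℝ)) fun _ => (1:ℝ)) = pencilMat n x lam from rfl,
      aux_det_spectral (pencilMat n x lam) (pencilMat_isHermitian n x lam) t]
    simp [eval_prod]
    rfl
  have hpoly : ∏ k : Fin n, (X - C (xs' (k:ℕ))) = ∏ k : Fin n, (X - C (μ k)) := by
    have hfin : ({t : ℝ | ¬ ∀ i ∈ range n, t ≠ x i}).Finite := by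
      have : {t : ℝ | ¬ ∀ i ∈ range n, t ≠ x i} ⊆ x '' (↑(range n) : Set ℕ) := by
        intro t htmem
        simp only [Set.mem_setOf_eq, not_forall] at htmem
        obtain ⟨i, hi, hne⟩ := htmem
        simp only [not_not] at hne
        exact ⟨i, by simpa using hi, hne.symm⟩
      exact Set.Finite.subset (Set.Finite.image x (range n).finite_toSet) this
    have hsub : (∏ k : Fin n, (X - C (xs' (k:ℕ)))) - (∏ k : Fin n, (X - C (μ k))) = 0 := by
      apply Polynomial.eq_zero_of_infinite_isRoot
      apply Set.Infinite.mono (s := {t : ℝ | ∀ i ∈ range n, t ≠ x i})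
      · intro t ht
        simp only [Set.mem_setOf_eq, IsRoot.def, eval_sub, sub_eq_zero]
        exact hev t ht
      · have := hfin.infinite_compl
        apply this.mono
        intro t ht
        simpa using ht
    exact sub_eq_zero.mp hsub
  exact aux_perm _ μ (aux_mono_fin n xs' hmono) hpoly

lemma aux_mono_nat (n : ℕ) (f : ℕ → ℝ) (h : ∀ i, i + 1 < n → f i ≤ f (i+1)) :
    ∀ i j, i ≤ j → j < n → f i ≤ f j := by
  have H : ∀ d j, j + d < n → f j ≤ f (j + d) := by
    intro d
    induction d with
    | zero => intro j _; simp
    | succ d ih =>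
        intro j hj
        calc f j ≤ f (j + d) := ih j (by omega)
          _ ≤ f (j + d + 1) := h _ (by omega)
  intro i j hij hj
  have := H (j - i) i (by omega)
  have e : i + (j - i) = j := by omega
  rwa [e] at this

lemma aux_kyfan {n m : ℕ} (hm1 : 1 ≤ m) (hmn : m ≤ n)
    (W : OrthonormalBasis (Fin n) ℝ (EuclideanSpace ℝ (Fin n)))
    (μ : Fin n → ℝ) (s : ℕ → ℝ) (hs : ∀ i j, i ≤ j → j < n → s i ≤ s j)
    (σ : Equiv.Perm (Fin n)) (hσ : (fun k : Fin n => s (k : ℕ)) = μ ∘ σ)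
    (u : Fin m → EuclideanSpace ℝ (Fin n)) (hu : Orthonormal ℝ u) :
    ∑ i ∈ range m, s i ≤ ∑ i : Fin m, ∑ k : Fin n, μ k * (⟪W k, u i⟫ : ℝ)^2 := by
  classical
  set q : Fin n → ℝ := fun k => ∑ i : Fin m, (⟪W k, u i⟫ : ℝ)^2 with hq
  have hswap : ∑ i : Fin m, ∑ k : Fin n, μ k * (⟪W k, u i⟫ : ℝ)^2 = ∑ k : Fin n, μ k * q k := by
    rw [Finset.sum_comm]
    exact Finset.sum_congr rfl fun k _ => by rw [hq, Finset.mul_sum]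
  rw [hswap]
  have hq0 : ∀ k, 0 ≤ q k := fun k => Finset.sum_nonneg fun i _ => sq_nonneg _
  have hq1 : ∀ k, q k ≤ 1 := by
    intro k
    have hb := hu.sum_inner_products_le (W k) (s := Finset.univ)
    have hnorm : ‖W k‖ = 1 := W.orthonormal.1 k
    calc q k = ∑ i : Fin m, ‖(⟪u i, W k⟫ : ℝ)‖^2 := by
          apply Finset.sum_congr rfl
          intro i _
          rw [Real.norm_eq_abs, sq_abs, real_inner_comm]
      _ ≤ ‖W k‖^2 := hb
      _ = 1 := by rw [hnorm]; norm_num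
  have hq2 : ∑ k : Fin n, q k = m := by
    have : ∀ i : Fin m, ∑ k : Fin n, (⟪W k, u i⟫ : ℝ)^2 = 1 := by
      intro i
      have hP := W.sum_inner_mul_inner (u i) (u i)
      have hself : (⟪u i, u i⟫ : ℝ) = 1 := by
        rw [real_inner_self_eq_norm_sq, hu.1 i]; norm_num
      rw [hself] at hP
      rw [← hP]
      apply Finset.sum_congr rfl
      intro k _
      rw [sq, real_inner_comm (W k) (u i)]
    calc ∑ k : Fin n, q k = ∑ i : Fin m, ∑ k : Fin n, (⟪W k, u i⟫ : ℝ)^2 := Finset.sum_comm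
      _ = ∑ _i : Fin m, (1:ℝ) := Finset.sum_congr rfl fun i _ => this i
      _ = m := by simp
  set c : ℝ := s (m - 1) with hc
  have key1 : ∀ k, min (μ k - c) 0 ≤ (μ k - c) * q k := by
    intro k
    rcases le_or_gt c (μ k) with hk | hk
    · rw [min_eq_right (by linarith)]
      exact mul_nonneg (by linarith) (hq0 k)
    · rw [min_eq_left (by linarith)]
      have := mul_le_mul_of_nonpos_left (hq1 k) (by linarith : μ k - c ≤ 0)
      linarith [this]
  have key2 : ∑ k : Fin n, min ((fun k : Fin n => s (k:ℕ)) k - c) 0 = ∑ k : Fin n, min (μ k - c) 0 := by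
    have h := Equiv.sum_comp σ (fun k => min (μ k - c) 0)
    rw [hσ]
    simpa [Function.comp] using h
  have key3 : ∑ k : Fin n, min (s (k:ℕ) - c) 0 = ∑ i ∈ range m, (s i - c) := by
    rw [Fin.sum_univ_eq_sum_range (fun k => min (s k - c) 0) n]
    rw [← Finset.sum_subset (Finset.range_subset_range.mpr hmn)]
    · apply Finset.sum_congr rfl
      intro i hi
      have him : i < m := mem_range.mp hi
      have : s i ≤ c := hs i (m-1) (by omega) (by omega)
      rw [min_eq_left (by linarith)]
    · intro i hi hni
      have h1 : i < n := mem_range.mp hi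
      have h2 : m ≤ i := by simpa using hni
      have : c ≤ s i := hs (m-1) i (by omega) h1
      rw [min_eq_right (by linarith)]
  have expand : ∑ k : Fin n, (μ k - c) * q k = (∑ k : Fin n, μ k * q k) - c * ∑ k : Fin n, q k := by
    rw [Finset.mul_sum, ← Finset.sum_sub_distrib]
    exact Finset.sum_congr rfl fun k _ => by ring
  have hsum1 : ∑ i ∈ range m, (s i - c) = (∑ i ∈ range m, s i) - m * c := by
    rw [Finset.sum_sub_distrib]
    simp [Finset.card_range]
  have hchain : ∑ i ∈ range m, (s i - c) ≤ ∑ k : Fin n, (μ k - c) * q k := by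
    calc ∑ i ∈ range m, (s i - c) = ∑ k : Fin n, min (s (k:ℕ) - c) 0 := key3.symm
      _ = ∑ k : Fin n, min (μ k - c) 0 := key2
      _ ≤ ∑ k : Fin n, (μ k - c) * q k := Finset.sum_le_sum fun k _ => key1 k
  rw [expand, hq2] at hchain
  rw [hsum1] at hchain
  linarith

lemma aux_bridge {n : ℕ} (M : Matrix (Fin n) (Fin n) ℝ) (hM : M.IsHermitian)
    (u : EuclideanSpace ℝ (Fin n)) :
    ∑ k : Fin n, hM.eigenvalues k * (⟪hM.eigenvectorBasis k, u⟫ : ℝ)^2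
      = ⟪u, Matrix.toEuclideanLin M u⟫ := by
  set W := hM.eigenvectorBasis with hW
  have heig : ∀ k, Matrix.toEuclideanLin M (W k) = hM.eigenvalues k • W k := by
    intro k
    apply (WithLp.equiv 2 (Fin n → ℝ)).injective
    rw [WithLp.equiv_apply, Matrix.piLp_ofLp_toEuclideanLin]
    simpa using hM.mulVec_eigenvectorBasis k
  have hexp : Matrix.toEuclideanLin M u
      = ∑ k : Fin n, (⟪W k, u⟫ : ℝ) • (hM.eigenvalues k • W k) := by
    conv_lhs => rw [← W.sum_repr' u, map_sum]
    apply Finset.sum_congr rfl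
    intro k _
    rw [_root_.map_smul, heig k]
  rw [hexp, inner_sum]
  apply Finset.sum_congr rfl
  intro k _
  rw [real_inner_smul_right, real_inner_smul_right, real_inner_comm]
  ring

lemma aux_quad_single (n : ℕ) (x : ℕ → ℝ) (lam : ℝ) (j : Fin n) :
    (⟪(EuclideanSpace.single j (1:ℝ)),
      Matrix.toEuclideanLin (pencilMat n x lam) (EuclideanSpace.single j (1:ℝ))⟫ : ℝ)
    = x (j : ℕ) + lam := by
  simp [pencilMat, Matrix.toEuclideanLin_apply, EuclideanSpace.inner_single_left,
    Matrix.mulVec_single, Matrix.add_apply, Matrix.diagonal_apply_eq, Matrix.vecMulVec_apply]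

lemma aux_quad_affine (n : ℕ) (x : ℕ → ℝ) (lam c : ℝ) (u : EuclideanSpace ℝ (Fin n)) :
    (⟪u, Matrix.toEuclideanLin (pencilMat n x lam) u⟫ : ℝ)
    = (⟪u, Matrix.toEuclideanLin (pencilMat n x c) u⟫ : ℝ)
      + (lam - c) * (∑ i : Fin n, (WithLp.equiv 2 (Fin n → ℝ) u) i)^2 := by
  have hMeq : pencilMat n x lam = pencilMat n x c
      + (lam - c) • Matrix.vecMulVec (fun _ : Fin n => (1:ℝ)) (fun _ : Fin n => (1:ℝ)) := by
    unfold pencilMat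
    rw [add_assoc, ← add_smul]
    ring_nf
  have hmv : ∀ w : Fin n → ℝ,
      (Matrix.vecMulVec (fun _ : Fin n => (1:ℝ)) (fun _ : Fin n => (1:ℝ))) *ᵥ w
        = fun _ => ∑ j : Fin n, w j := by
    intro w
    funext i
    simp [Matrix.mulVec, Matrix.vecMulVec_apply, dotProduct]
  have hvv : (⟪u, Matrix.toEuclideanLin
      (Matrix.vecMulVec (fun _ : Fin n => (1:ℝ)) (fun _ : Fin n => (1:ℝ))) u⟫ : ℝ)
      = (∑ i : Fin n, (WithLp.equiv 2 (Fin n → ℝ) u) i)^2 := by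
    simp only [Matrix.toEuclideanLin_apply, hmv, PiLp.inner_apply, RCLike.inner_apply,
      conj_trivial]
    rw [← Finset.mul_sum, sq]
    exact mul_comm _ _
  rw [hMeq, map_add, LinearMap.add_apply, inner_add_right, _root_.map_smul,
    LinearMap.smul_apply, real_inner_smul_right, hvv]



lemma aux_kyfan_mat {n m : ℕ} (hm1 : 1 ≤ m) (hmn : m ≤ n) (x : ℕ → ℝ) (lam : ℝ)
    (slam : ℕ → ℝ) (hslam : ∀ i j, i ≤ j → j < n → slam i ≤ slam j)
    (σl : Equiv.Perm (Fin n))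
    (hσl : (fun k : Fin n => slam (k : ℕ)) = (pencilMat_isHermitian n x lam).eigenvalues ∘ σl)
    (u : Fin m → EuclideanSpace ℝ (Fin n)) (hu : Orthonormal ℝ u) :
    ∑ i ∈ range m, slam i
      ≤ ∑ i : Fin m, (⟪u i, Matrix.toEuclideanLin (pencilMat n x lam) (u i)⟫ : ℝ) := by
  refine (aux_kyfan hm1 hmn (pencilMat_isHermitian n x lam).eigenvectorBasis
    (pencilMat_isHermitian n x lam).eigenvalues slam hslam σl hσl u hu).trans_eq ?_
  exact Finset.sum_congr rfl fun i _ => aux_bridge _ (pencilMat_isHermitian n x lam) (u i)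

lemma aux_collapse {n : ℕ} (M : Matrix (Fin n) (Fin n) ℝ) (hM : M.IsHermitian) (l : Fin n) :
    (⟪hM.eigenvectorBasis l, Matrix.toEuclideanLin M (hM.eigenvectorBasis l)⟫ : ℝ)
      = hM.eigenvalues l := by
  rw [← aux_bridge M hM]
  have hite := orthonormal_iff_ite.mp hM.eigenvectorBasis.orthonormal
  have : ∀ k : Fin n, hM.eigenvalues k * (⟪hM.eigenvectorBasis k, hM.eigenvectorBasis l⟫ : ℝ)^2
      = if k = l then hM.eigenvalues k else 0 := by
    intro k
    rw [hite k l]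
    by_cases h : k = l <;> simp [h]
  rw [Finset.sum_congr rfl fun k _ => this k, Finset.sum_ite_eq' Finset.univ l]
  simp

lemma aux_estep {n m : ℕ} (hm1 : 1 ≤ m) (hmn : m ≤ n) (x : ℕ → ℝ) (c : ℝ)
    (sc : ℕ → ℝ) (σc : Equiv.Perm (Fin n))
    (hσc : (fun k : Fin n => sc (k : ℕ)) = (pencilMat_isHermitian n x c).eigenvalues ∘ σc) :
    ∃ S : ℝ, 0 ≤ S ∧ ∀ lam : ℝ, ∀ slam : ℕ → ℝ,
      (∀ i j, i ≤ j → j < n → slam i ≤ slam j) →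
      ∀ σl : Equiv.Perm (Fin n),
      (fun k : Fin n => slam (k : ℕ)) = (pencilMat_isHermitian n x lam).eigenvalues ∘ σl →
      ∑ i ∈ range m, slam i ≤ (∑ i ∈ range m, sc i) + (lam - c) * S := by
  classical
  set W := (pencilMat_isHermitian n x c).eigenvectorBasis with hW
  set u : Fin m → EuclideanSpace ℝ (Fin n) := fun i => W (σc (Fin.castLE hmn i)) with hu
  have huon : Orthonormal ℝ u :=
    W.orthonormal.comp _ (σc.injective.comp (Fin.castLE_injective hmn))
  set S : ℝ := ∑ i : Fin m, (∑ j : Fin n, (WithLp.equiv 2 (Fin n → ℝ) (u i)) j)^2 with hS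
  have hS0 : 0 ≤ S := Finset.sum_nonneg fun i _ => sq_nonneg _
  have hatc : ∑ i : Fin m, (⟪u i, Matrix.toEuclideanLin (pencilMat n x c) (u i)⟫ : ℝ)
      = ∑ i ∈ range m, sc i := by
    have h1 : ∀ i : Fin m, (⟪u i, Matrix.toEuclideanLin (pencilMat n x c) (u i)⟫ : ℝ)
        = sc ((Fin.castLE hmn i : Fin n) : ℕ) := by
      intro i
      rw [hu]
      rw [aux_collapse _ (pencilMat_isHermitian n x c)]
      have := congrFun hσc (Fin.castLE hmn i)
      simp only [Function.comp_apply] at this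
      exact this.symm
    rw [Finset.sum_congr rfl fun i _ => h1 i]
    rw [← Fin.sum_univ_eq_sum_range (fun i => sc i) m]
    apply Finset.sum_congr rfl
    intro i _
    simp
  refine ⟨S, hS0, ?_⟩
  intro lam slam hslam σl hσl
  have h2 := aux_kyfan_mat hm1 hmn x lam slam hslam σl hσl u huon
  have h3 : ∑ i : Fin m, (⟪u i, Matrix.toEuclideanLin (pencilMat n x lam) (u i)⟫ : ℝ)
      = (∑ i ∈ range m, sc i) + (lam - c) * S := by
    rw [Finset.sum_congr rfl fun i _ => aux_quad_affine n x lam c (u i)]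
    rw [Finset.sum_add_distrib, hatc, ← Finset.mul_sum]
  linarith [h2, h3.le]

lemma aux_step0 {n m : ℕ} (hm1 : 1 ≤ m) (hmn : m ≤ n) (x : ℕ → ℝ)
    (s0 : ℕ → ℝ) (τ : Equiv.Perm (Fin n))
    (hτ : (fun k : Fin n => s0 (k : ℕ)) = (fun k : Fin n => x (k : ℕ)) ∘ τ) :
    ∀ lam : ℝ, ∀ slam : ℕ → ℝ,
      (∀ i j, i ≤ j → j < n → slam i ≤ slam j) →
      ∀ σl : Equiv.Perm (Fin n),
      (fun k : Fin n => slam (k : ℕ)) = (pencilMat_isHermitian n x lam).eigenvalues ∘ σl →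
      ∑ i ∈ range m, slam i ≤ (∑ i ∈ range m, s0 i) + lam * m := by
  classical
  intro lam slam hslam σl hσl
  set u : Fin m → EuclideanSpace ℝ (Fin n) :=
    fun i => EuclideanSpace.single (τ (Fin.castLE hmn i)) (1:ℝ) with hu
  have huon : Orthonormal ℝ u := by
    have hb := (EuclideanSpace.basisFun (Fin n) ℝ).orthonormal
    have := hb.comp (τ ∘ Fin.castLE hmn) (τ.injective.comp (Fin.castLE_injective hmn))
    convert this using 1
    · rfl
    funext i
    simp [hu, Function.comp_apply, EuclideanSpace.basisFun_apply]
  have h2 := aux_kyfan_mat hm1 hmn x lam slam hslam σl hσl u huon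
  have h3 : ∑ i : Fin m, (⟪u i, Matrix.toEuclideanLin (pencilMat n x lam) (u i)⟫ : ℝ)
      = (∑ i ∈ range m, s0 i) + lam * m := by
    have h1 : ∀ i : Fin m, (⟪u i, Matrix.toEuclideanLin (pencilMat n x lam) (u i)⟫ : ℝ)
        = s0 ((Fin.castLE hmn i : Fin n) : ℕ) + lam := by
      intro i
      rw [hu]
      rw [aux_quad_single n x lam (τ (Fin.castLE hmn i))]
      have := congrFun hτ (Fin.castLE hmn i)
      simp only [Function.comp_apply] at this
      rw [← this]
    rw [Finset.sum_congr rfl fun i _ => h1 i, Finset.sum_add_distrib]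
    congr 1
    · rw [← Fin.sum_univ_eq_sum_range (fun i => s0 i) m]
      apply Finset.sum_congr rfl
      intro i _
      simp
    · simp [mul_comm]
  linarith [h2, h3.le]



/-- Monotony of the partial sums of the (shifted) ordered roots of the pencil `P - λP'`
of a monic hyperbolic polynomial: each `f_m(λ) = ∑_{i<m}(x_i(λ) - λ)` is nondecreasing on
`(-∞,0]` and nonincreasing on `[0,∞)`, while `f_n` is constant. -/
theorem pencil_partial_sums_monotone
    (n : ℕ) (hn : 2 ≤ n) (P : Polynomial ℝ) (x : ℕ → ℝ)
    (hP : P = ∏ i ∈ Finset.range n, (X - C (x i)))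
    (xs : ℝ → ℕ → ℝ)
    (hmono : ∀ lam : ℝ, ∀ i, i + 1 < n → xs lam i ≤ xs lam (i + 1))
    (hfact : ∀ lam : ℝ,
      P - C lam * derivative P = ∏ i ∈ Finset.range n, (X - C (xs lam i))) :
    (∀ m, 1 ≤ m → m ≤ n - 1 →
      (∀ a b : ℝ, a ≤ b → b ≤ 0 →
        ∑ i ∈ Finset.range m, (xs a i - a) ≤ ∑ i ∈ Finset.range m, (xs b i - b)) ∧
      (∀ a b : ℝ, 0 ≤ a → a ≤ b →
        ∑ i ∈ Finset.range m, (xs b i - b) ≤ ∑ i ∈ Finset.range m, (xs a i - a))) ∧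
    ∀ lam : ℝ,
      ∑ i ∈ Finset.range n, (xs lam i - lam) = ∑ i ∈ Finset.range n, xs 0 i := by
  subst hP
  have hn1 : 1 ≤ n := by omega
  -- total sums
  have htot : ∀ lam : ℝ, ∑ i ∈ range n, xs lam i = (∑ i ∈ range n, x i) + n * lam :=
    fun lam => sum_roots_eq n hn1 x (xs lam) lam (hfact lam)
  -- eigen identification for every lam
  have hID : ∀ lam : ℝ, ∃ σ : Equiv.Perm (Fin n),
      (fun k : Fin n => xs lam (k : ℕ)) = (pencilMat_isHermitian n x lam).eigenvalues ∘ σ :=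
    fun lam => aux_identify n x (xs lam) lam (hfact lam) (hmono lam)
  choose σ hσ using hID
  -- permutation sorting x at lam = 0
  have h00 := hfact 0
  rw [Polynomial.C_0, zero_mul, sub_zero] at h00
  obtain ⟨τ, hτ⟩ : ∃ τ : Equiv.Perm (Fin n),
      (fun k : Fin n => xs 0 (k : ℕ)) = (fun k : Fin n => x (k : ℕ)) ∘ τ := by
    apply aux_perm _ _ (aux_mono_fin n (xs 0) (hmono 0))
    rw [Fin.prod_univ_eq_prod_range (fun i => X - C (xs 0 i)) n,
      Fin.prod_univ_eq_prod_range (fun i => X - C (x i)) n]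
    exact h00.symm
  constructor
  · intro m hm1 hmn'
    have hmn : m ≤ n := by omega
    -- E-sum notation
    have hstep0 : ∀ lam : ℝ, ∑ i ∈ range m, xs lam i ≤ (∑ i ∈ range m, xs 0 i) + lam * m :=
      fun lam => aux_step0 hm1 hmn x (xs 0) τ hτ lam (xs lam)
        (aux_mono_nat n (xs lam) (hmono lam)) (σ lam) (hσ lam)
    have hdiff : ∀ lam : ℝ, ∑ i ∈ range m, (xs lam i - lam)
        = (∑ i ∈ range m, xs lam i) - m * lam := by
      intro lam
      rw [Finset.sum_sub_distrib]
      simp [Finset.card_range]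
    constructor
    · -- left side : a ≤ b ≤ 0
      intro a b hab hb0
      rw [hdiff, hdiff]
      rcases eq_or_lt_of_le hb0 with hb | hb
      · -- b = 0
        subst hb
        have := hstep0 a
        push_cast at this ⊢
        linarith
      · obtain ⟨S, hS0, hSb⟩ := aux_estep hm1 hmn x b (xs b) (σ b) (hσ b)
        have hE0 := hSb 0 (xs 0) (aux_mono_nat n (xs 0) (hmono 0)) (σ 0) (hσ 0)
        have hEa := hSb a (xs a) (aux_mono_nat n (xs a) (hmono a)) (σ a) (hσ a)
        have hAb := hstep0 b
        -- b * S ≤ b * m  hence S ≥ m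
        have hbs : b * S ≤ b * m := by linarith
        have hSm : (m : ℝ) ≤ S := by
          have h' : (-b) * (m:ℝ) ≤ (-b) * S := by linarith
          exact le_of_mul_le_mul_left h' (by linarith)
        have hmul : (a - b) * S ≤ (a - b) * m := by
          apply mul_le_mul_of_nonpos_left hSm (by linarith)
        linarith
    · -- right side : 0 ≤ a ≤ b
      intro a b ha0 hab
      rw [hdiff, hdiff]
      rcases eq_or_lt_of_le ha0 with ha | ha
      · subst ha
        have := hstep0 b
        push_cast at this ⊢
        linarith
      · obtain ⟨S, hS0, hSa⟩ := aux_estep hm1 hmn x a (xs a) (σ a) (hσ a)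
        have hE0 := hSa 0 (xs 0) (aux_mono_nat n (xs 0) (hmono 0)) (σ 0) (hσ 0)
        have hEb := hSa b (xs b) (aux_mono_nat n (xs b) (hmono b)) (σ b) (hσ b)
        have hAa := hstep0 a
        have has : a * S ≤ a * m := by linarith
        have hSm : S ≤ (m : ℝ) := le_of_mul_le_mul_left has ha
        have hmul : (b - a) * S ≤ (b - a) * m := by
          apply mul_le_mul_of_nonneg_left hSm (by linarith)
        linarith
  · intro lam
    have h1 := htot lam
    have h2 := htot 0
    rw [Finset.sum_sub_distrib]
    simp only [Finset.sum_const, Finset.card_range, nsmul_eq_mul] at *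
    linarith
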